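/- Suppose there exists a constant C such that φ_T(n², 2n, n) ≤ C for all natural numbers n ≥ 1, where φ_T(M₁,M₂,n) := -∑_{d squarefree, d>1, prime factors ≤ n} μ(d)·⌊((M₁ mod d)+(M₂ mod d))/d⌋. Then π((n+1)²) - π(n²) → ∞ as n → ∞. -/

import Mathlib

open ArithmeticFunction Nat Finset Filter Asymptotics
open scoped ArithmeticFunction.Moebius ArithmeticFunction.zeta

/-- Index set: squarefree `d > 1` all of whose prime factors are `≤ n`. -/
def sqfSet (n : ℕ) : Finset ℕ :=
  (Finset.range (primorial n + 1)).filter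
    (fun d => 1 < d ∧ Squarefree d ∧ ∀ p ∈ d.primeFactors, p ≤ n)

/-- The transformed Legendre function `φ_T`. -/
def phiT (M₁ M₂ n : ℕ) : ℤ :=
  -∑ d ∈ sqfSet n, ArithmeticFunction.moebius d * (((M₁ % d + M₂ % d) / d : ℕ) : ℤ)

lemma squarefree_prod_primes {s : Finset ℕ} (hs : ∀ p ∈ s, p.Prime) :
    Squarefree (∏ p ∈ s, p) := by
  induction s using Finset.cons_induction with
  | empty => simpa using squarefree_one
  | cons p s hp ih =>
    rw [Finset.prod_cons]
    have hpp := hs p (Finset.mem_cons_self _ _)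
    have hcop : Nat.Coprime p (∏ q ∈ s, q) := by
      rw [hpp.coprime_iff_not_dvd, hpp.prime.dvd_finset_prod_iff]
      rintro ⟨q, hq, hdvd⟩
      have hqp := hs q (Finset.mem_cons_of_mem hq)
      rw [Nat.prime_dvd_prime_iff_eq hpp hqp] at hdvd
      exact hp (hdvd ▸ hq)
    rw [Nat.squarefree_mul hcop]
    exact ⟨hpp.squarefree, ih (fun q hq => hs q (Finset.mem_cons_of_mem hq))⟩

lemma primorial_squarefree (n : ℕ) : Squarefree (primorial n) :=
  squarefree_prod_primes (fun p hp => (Finset.mem_filter.1 hp).2)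

lemma primeFactors_primorial' (n : ℕ) :
    (primorial n).primeFactors = (Finset.range (n + 1)).filter Nat.Prime :=
  Nat.primeFactors_prod (fun p hp => (Finset.mem_filter.1 hp).2)

lemma sqfSet_eq (n : ℕ) : sqfSet n = (primorial n).divisors.erase 1 := by
  ext d
  simp only [sqfSet, Finset.mem_filter, Finset.mem_range, Finset.mem_erase,
    Nat.mem_divisors, Nat.lt_succ_iff]
  constructor
  · rintro ⟨hle, h1, hsqf, hfac⟩
    refine ⟨by omega, ?_, (primorial_pos n).ne'⟩
    calc d = ∏ p ∈ d.primeFactors, p := (Nat.prod_primeFactors_of_squarefree hsqf).symm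
    _ ∣ primorial n := by
        refine Finset.prod_dvd_prod_of_subset _ _ _ (fun p hp => ?_)
        have := Nat.prime_of_mem_primeFactors hp
        exact Finset.mem_filter.2 ⟨Finset.mem_range.2 (Nat.lt_succ_of_le (hfac p hp)), this⟩
  · rintro ⟨hne, hdvd, -⟩
    have hP := primorial_pos n
    have hdle : d ≤ primorial n := Nat.le_of_dvd hP hdvd
    have hd0 : d ≠ 0 := by rintro rfl; exact hP.ne' (Nat.eq_zero_of_zero_dvd hdvd)
    refine ⟨hdle, by omega, (primorial_squarefree n).squarefree_of_dvd hdvd, fun p hp => ?_⟩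
    have hpP : p ∈ (primorial n).primeFactors := by
      rw [Nat.mem_primeFactors] at hp ⊢
      exact ⟨hp.1, hp.2.1.trans hdvd, hP.ne'⟩
    rw [primeFactors_primorial'] at hpP
    exact Nat.lt_succ_iff.1 (Finset.mem_range.1 (Finset.mem_filter.1 hpP).1)

lemma sum_moebius_divisors (g : ℕ) :
    ∑ d ∈ g.divisors, μ d = if g = 1 then 1 else 0 := by
  have h : (μ * ζ : ArithmeticFunction ℤ) g = (1 : ArithmeticFunction ℤ) g := by
    rw [moebius_mul_coe_zeta]
  rwa [coe_mul_zeta_apply, one_apply] at h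

lemma legendre_identity (n M : ℕ) :
    (M : ℤ) + ∑ d ∈ sqfSet n, μ d * ((M / d : ℕ) : ℤ) =
      (((Finset.Ioc 0 M).filter (fun m => Nat.Coprime (primorial n) m)).card : ℤ) := by
  have hP : 0 < primorial n := primorial_pos n
  have h1 : 1 ∈ (primorial n).divisors := Nat.one_mem_divisors.2 hP.ne'
  have hL : (M : ℤ) + ∑ d ∈ sqfSet n, μ d * ((M / d : ℕ) : ℤ) =
      ∑ d ∈ (primorial n).divisors, μ d * ((M / d : ℕ) : ℤ) := by
    rw [sqfSet_eq, ← Finset.add_sum_erase _ _ h1]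
    simp
  rw [hL]
  have hstep : ∀ d : ℕ, ((M / d : ℕ) : ℤ) = ∑ m ∈ Finset.Ioc 0 M, if d ∣ m then (1:ℤ) else 0 := by
    intro d
    rw [Finset.sum_boole, ← Nat.Ioc_filter_dvd_card_eq_div]
  calc ∑ d ∈ (primorial n).divisors, μ d * ((M / d : ℕ) : ℤ)
      = ∑ d ∈ (primorial n).divisors, ∑ m ∈ Finset.Ioc 0 M,
          (if d ∣ m then (μ d : ℤ) else 0) := by
        refine Finset.sum_congr rfl (fun d _ => ?_)
        rw [hstep d, Finset.mul_sum]
        exact Finset.sum_congr rfl (fun m _ => by split <;> simp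
        )
    _ = ∑ m ∈ Finset.Ioc 0 M, ∑ d ∈ (primorial n).divisors,
          (if d ∣ m then (μ d : ℤ) else 0) := Finset.sum_comm
    _ = ∑ m ∈ Finset.Ioc 0 M, (if Nat.Coprime (primorial n) m then (1:ℤ) else 0) := by
        refine Finset.sum_congr rfl (fun m hm => ?_)
        have hm0 : m ≠ 0 := by have := (Finset.mem_Ioc.1 hm).1; omega
        rw [← Finset.sum_filter]
        have hg : Nat.gcd (primorial n) m ≠ 0 :=
          fun hh => hm0 (Nat.eq_zero_of_gcd_eq_zero_right hh)
        have hfe : (primorial n).divisors.filter (· ∣ m) = (Nat.gcd (primorial n) m).divisors := by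
          ext d
          simp only [Finset.mem_filter, Nat.mem_divisors, Nat.dvd_gcd_iff]
          constructor
          · rintro ⟨⟨hdP, -⟩, hdm⟩; exact ⟨⟨hdP, hdm⟩, hg⟩
          · rintro ⟨⟨hdP, hdm⟩, -⟩; exact ⟨⟨hdP, hP.ne'⟩, hdm⟩
        rw [hfe, sum_moebius_divisors]
    _ = (((Finset.Ioc 0 M).filter (fun m => Nat.Coprime (primorial n) m)).card : ℤ) := by
        rw [Finset.sum_boole]

lemma card_primes_Ioc (n M : ℕ) (h : n ≤ M) :
    ((Finset.Ioc n M).filter Nat.Prime).card + Nat.primeCounting n = Nat.primeCounting M := by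
  simp only [Nat.primeCounting, Nat.primeCounting', Nat.count_eq_card_filter_range]
  rw [Finset.range_eq_Ico, Finset.range_eq_Ico, (Finset.Ico_union_Ico_eq_Ico (a:=0) (b:=n+1) (c:=M+1) (by omega) (by omega)).symm,
    Finset.filter_union, Finset.card_union_of_disjoint
      (Finset.disjoint_filter_filter (Finset.Ico_disjoint_Ico_consecutive 0 (n+1) (M+1))),
    Finset.Ico_add_one_add_one_eq_Ioc]
  exact Nat.add_comm _ _

lemma nat_div_add (a b d : ℕ) (hd : 0 < d) :
    (a + b) / d = a / d + b / d + (a % d + b % d) / d := by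
  conv_lhs => rw [← Nat.div_add_mod a d, ← Nat.div_add_mod b d]
  have h : d * (a / d) + a % d + (d * (b / d) + b % d)
      = d * (a / d + b / d) + (a % d + b % d) := by ring
  rw [h, Nat.mul_add_div hd]

lemma coprime_count (n M : ℕ) (h1 : 1 ≤ n) (hnM : n ≤ M) (hM : M ≤ n ^ 2 + 2 * n) :
    (((Finset.Ioc 0 M).filter (fun m => Nat.Coprime (primorial n) m)).card : ℤ) =
      1 + Nat.primeCounting M - Nat.primeCounting n := by
  have hset : (Finset.Ioc 0 M).filter (fun m => Nat.Coprime (primorial n) m)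
      = insert 1 ((Finset.Ioc n M).filter Nat.Prime) := by
    ext m
    simp only [Finset.mem_filter, Finset.mem_Ioc, Finset.mem_insert]
    constructor
    · rintro ⟨⟨hm0, hmM⟩, hcop⟩
      by_cases hm1 : m = 1
      · left; exact hm1
      right
      have hmin : n < m.minFac := by
        by_contra hle
        push_neg at hle
        have hdvd : m.minFac ∣ primorial n :=
          Finset.dvd_prod_of_mem _ (Finset.mem_filter.2
            ⟨Finset.mem_range.2 (by omega), Nat.minFac_prime hm1⟩)
        have hcop2 : Nat.Coprime m.minFac m := Nat.Coprime.coprime_dvd_left hdvd hcop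
        have := hcop2.eq_one_of_dvd (Nat.minFac_dvd m)
        exact (Nat.minFac_prime hm1).one_lt.ne' this
      have hprime : m.Prime := by
        by_contra hnp
        have h2 := Nat.minFac_sq_le_self (by omega) hnp
        have h3 : (n+1)^2 ≤ m.minFac ^ 2 := Nat.pow_le_pow_left (by omega) 2
        nlinarith
      have hml : m.minFac ≤ m := Nat.minFac_le (by omega)
      exact ⟨⟨by omega, hmM⟩, hprime⟩
    · rintro (rfl | ⟨⟨hnm, hmM⟩, hp⟩)
      · exact ⟨⟨Nat.one_pos, by omega⟩, Nat.coprime_one_right _⟩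
      · refine ⟨⟨by omega, hmM⟩, ?_⟩
        rw [Nat.coprime_comm, Nat.Prime.coprime_iff_not_dvd hp]
        intro hdvd
        have hmem : m ∈ (primorial n).primeFactors :=
          Nat.mem_primeFactors.2 ⟨hp, hdvd, (primorial_pos n).ne'⟩
        rw [primeFactors_primorial'] at hmem
        have := Finset.mem_range.1 (Finset.mem_filter.1 hmem).1
        omega
  rw [hset, Finset.card_insert_of_notMem (by simp [Nat.not_prime_one])]
  have hc := card_primes_Ioc n M hnM
  push_cast [← hc]
  ring

lemma key_identity (n : ℕ) (h1 : 1 ≤ n) :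
    (Nat.primeCounting ((n + 1) ^ 2) : ℤ) - Nat.primeCounting (n ^ 2) =
      (Nat.primeCounting (2 * n) : ℤ) - Nat.primeCounting n + 1 - phiT (n ^ 2) (2 * n) n := by
  have e1 := legendre_identity n (n ^ 2)
  have e2 := legendre_identity n (2 * n)
  have e3 := legendre_identity n (n ^ 2 + 2 * n)
  have c1 := coprime_count n (n ^ 2) h1 (Nat.le_self_pow two_ne_zero n) (Nat.le_add_right _ _)
  have c2 := coprime_count n (2 * n) h1 (by omega) (Nat.le_add_left _ _)
  have c3 := coprime_count n (n ^ 2 + 2 * n) h1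
    ((Nat.le_self_pow two_ne_zero n).trans (Nat.le_add_right _ _)) le_rfl
  have hsum : ∑ d ∈ sqfSet n, (μ d : ℤ) * (((n ^ 2 + 2 * n) / d : ℕ) : ℤ)
      = (∑ d ∈ sqfSet n, (μ d : ℤ) * ((n ^ 2 / d : ℕ) : ℤ))
        + (∑ d ∈ sqfSet n, (μ d : ℤ) * ((2 * n / d : ℕ) : ℤ))
        - phiT (n ^ 2) (2 * n) n := by
    rw [phiT, sub_neg_eq_add, ← Finset.sum_add_distrib, ← Finset.sum_add_distrib]
    refine Finset.sum_congr rfl (fun d hd => ?_)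
    have hd1 : 0 < d := by
      have := (Finset.mem_filter.1 hd).2.1; omega
    rw [nat_div_add (n ^ 2) (2 * n) d hd1]
    push_cast
    ring
  have hcast : ((n ^ 2 + 2 * n : ℕ) : ℤ) = ((n ^ 2 : ℕ) : ℤ) + ((2 * n : ℕ) : ℤ) := by push_cast; ring
  have hpi : (Nat.primeCounting ((n + 1) ^ 2) : ℤ) = Nat.primeCounting (n ^ 2 + 2 * n) := by
    have hnp : ¬ Nat.Prime (n ^ 2 + 2 * n + 1) := by
      intro hp
      have hd : (n + 1) ∣ (n ^ 2 + 2 * n + 1) := ⟨n + 1, by ring⟩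
      rcases (Nat.Prime.eq_one_or_self_of_dvd hp (n + 1) hd) with h | h
      · omega
      · nlinarith
    have hsq : (n + 1) ^ 2 = (n ^ 2 + 2 * n) + 1 := by ring
    rw [hsq]
    have : Nat.primeCounting ((n ^ 2 + 2 * n) + 1) = Nat.primeCounting (n ^ 2 + 2 * n) := by
      show Nat.count Nat.Prime ((n ^ 2 + 2 * n) + 1 + 1) = Nat.count Nat.Prime ((n ^ 2 + 2 * n) + 1)
      rw [Nat.count_succ]
      simp [hnp]
    rw [this]
  rw [hpi]
  rw [hsum, hcast] at e3
  linarith [e1, e2, e3, c1, c2, c3]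

lemma sqrt_log_littleO :
    (fun y : ℝ => Real.sqrt y * Real.log y) =o[atTop] (id : ℝ → ℝ) := by
  have h1 : Real.log =o[atTop] fun y : ℝ => y ^ (1/2 : ℝ) :=
    isLittleO_log_rpow_atTop (by norm_num)
  have h2 : (fun y : ℝ => Real.sqrt y * Real.log y)
      =o[atTop] (fun y : ℝ => Real.sqrt y * y ^ (1/2 : ℝ)) :=
    (Asymptotics.isBigO_refl (fun y : ℝ => Real.sqrt y) atTop).mul_isLittleO h1
  refine h2.trans_isBigO (Asymptotics.IsBigO.of_bound 1 ?_)
  filter_upwards [Filter.eventually_ge_atTop (0:ℝ)] with y hy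
  rw [← Real.sqrt_eq_rpow, Real.mul_self_sqrt hy, one_mul, id_eq]

lemma log_bound (K : ℝ) :
    (fun x : ℝ => Real.log x + (Real.sqrt (2*x) * Real.log (2*x) + K * Real.log (2*x)))
      =o[atTop] (id : ℝ → ℝ) := by
  have hcomp : Filter.Tendsto (fun x : ℝ => 2 * x) atTop atTop :=
    Filter.Tendsto.const_mul_atTop two_pos tendsto_id
  have htwo : (fun x : ℝ => 2 * x) =O[atTop] (id : ℝ → ℝ) := by
    refine Asymptotics.IsBigO.of_bound 2 ?_
    filter_upwards [Filter.eventually_ge_atTop (0:ℝ)] with x hx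
    simp [abs_of_nonneg hx, abs_of_nonneg (by linarith : (0:ℝ) ≤ 2*x)]
  have hA : (fun x : ℝ => Real.sqrt (2*x) * Real.log (2*x)) =o[atTop] (id : ℝ → ℝ) :=
    (sqrt_log_littleO.comp_tendsto hcomp).trans_isBigO htwo
  have hB : (fun x : ℝ => K * Real.log (2*x)) =o[atTop] (id : ℝ → ℝ) := by
    have := (Real.isLittleO_log_id_atTop.comp_tendsto hcomp).trans_isBigO htwo
    simpa using this.const_mul_left K
  exact Real.isLittleO_log_id_atTop.add (hA.add hB)

lemma real_main (K : ℕ) :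
    ∀ᶠ x : ℝ in atTop,
      x * ((2*x) ^ (Real.sqrt (2*x)) * 4 ^ (2*x/3) * (2*x) ^ (K:ℝ)) ≤ 4 ^ x := by
  have hb := (log_bound (K:ℝ)).bound (by norm_num : (0:ℝ) < 0.4)
  filter_upwards [hb, Filter.eventually_ge_atTop (2:ℝ)] with x hx h2
  have hx0 : 0 < x := by linarith
  have h2x : (0:ℝ) < 2 * x := by linarith
  have hlog4 : (1.38:ℝ) ≤ Real.log 4 := by
    have h := Real.log_two_gt_d9
    have : Real.log 4 = 2 * Real.log 2 := by
      rw [show (4:ℝ) = 2^2 by norm_num, Real.log_pow]; push_cast; ring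
    linarith
  have hA : Real.log x + (Real.sqrt (2*x) * Real.log (2*x) + (K:ℝ) * Real.log (2*x))
      ≤ 0.4 * x := by
    simp only [id_eq] at hx
    calc Real.log x + (Real.sqrt (2*x) * Real.log (2*x) + (K:ℝ) * Real.log (2*x))
        ≤ |Real.log x + (Real.sqrt (2*x) * Real.log (2*x) + (K:ℝ) * Real.log (2*x))| :=
          le_abs_self _
      _ ≤ 0.4 * |x| := hx
      _ = 0.4 * x := by rw [abs_of_pos hx0]
  have hLpos : 0 < x * ((2*x) ^ (Real.sqrt (2*x)) * 4 ^ (2*x/3) * (2*x) ^ (K:ℝ)) := by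
    positivity
  have hRpos : (0:ℝ) < (4:ℝ) ^ x := by positivity
  rw [← Real.log_le_log_iff hLpos hRpos]
  rw [Real.log_mul hx0.ne' (by positivity), Real.log_mul (by positivity) (by positivity),
    Real.log_mul (by positivity) (by positivity), Real.log_rpow h2x, Real.log_rpow (by norm_num), Real.log_rpow h2x,
    Real.log_rpow (by norm_num)]
  nlinarith [hA, hlog4, Real.sqrt_nonneg (2*x)]

lemma nat_main (K : ℕ) :
    ∀ᶠ n : ℕ in atTop,
      n * ((2*n) ^ (Nat.sqrt (2*n)) * 4 ^ (2*n/3) * (2*n) ^ K) ≤ 4 ^ n := by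
  obtain ⟨x₀, hx₀⟩ := Filter.eventually_atTop.mp (real_main K)
  filter_upwards [Filter.eventually_ge_atTop (max 1 ⌈x₀⌉₊)] with n hn
  have hn1 : 1 ≤ n := le_trans (le_max_left _ _) hn
  have hnx : x₀ ≤ (n : ℝ) := by
    have : ⌈x₀⌉₊ ≤ n := le_trans (le_max_right _ _) hn
    exact Nat.ceil_le.mp this
  have hb := hx₀ (n : ℝ) hnx
  rw [show ((4:ℝ)) ^ ((n:ℕ):ℝ) = (4:ℝ) ^ n from Real.rpow_natCast 4 n] at hb
  rw [← @Nat.cast_le ℝ]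
  push_cast
  refine le_trans ?_ hb
  have h2n : (1:ℝ) ≤ 2 * (n:ℝ) := by
    have : (1:ℝ) ≤ (n:ℝ) := by exact_mod_cast hn1
    linarith
  have g1 : ((Nat.sqrt (2*n) : ℕ) : ℝ) ≤ Real.sqrt (2*(n:ℝ)) := by
    have h := Real.nat_sqrt_le_real_sqrt (a := 2*n)
    rwa [show (((2*n : ℕ)) : ℝ) = 2*(n:ℝ) by push_cast; ring] at h
  have g2 : ((2*n/3 : ℕ) : ℝ) ≤ 2*(n:ℝ)/3 := by
    calc ((2*n/3 : ℕ) : ℝ) ≤ ((2*n : ℕ):ℝ)/3 := Nat.cast_div_le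
    _ = 2*(n:ℝ)/3 := by push_cast; ring
  rw [show ((2:ℝ)*(n:ℝ)) ^ (Nat.sqrt (2*n)) = ((2:ℝ)*(n:ℝ)) ^ ((Nat.sqrt (2*n) : ℕ):ℝ) by
        rw [Real.rpow_natCast],
      show ((4:ℝ)) ^ (2*n/3) = (4:ℝ) ^ (((2*n/3 : ℕ)):ℝ) by rw [Real.rpow_natCast],
      show ((2:ℝ)*(n:ℝ)) ^ K = ((2:ℝ)*(n:ℝ)) ^ ((K:ℕ):ℝ) by rw [Real.rpow_natCast]]
  gcongr <;> first | exact h2n | norm_num | exact g1 | exact g2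

lemma centralBinom_le (n : ℕ) (hn : 2 < n) :
    Nat.centralBinom n ≤ ((2*n) ^ Nat.sqrt (2*n) * 4 ^ (2*n/3))
      * (2*n) ^ (((Finset.Ioc n (2*n)).filter Nat.Prime).card) := by
  have n_pos : 0 < n := by omega
  have n2_pos : 1 ≤ 2 * n := by omega
  set f : ℕ → ℕ := fun x => x ^ (Nat.centralBinom n).factorization x with hf
  set T : Finset ℕ := (Finset.range (2*n+1)).filter Nat.Prime with hT
  have hcb : Nat.centralBinom n = ∏ p ∈ T, f p := by
    rw [hT, Finset.prod_filter_of_ne, Nat.prod_pow_factorization_centralBinom]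
    intro p _ h
    contrapose! h
    rw [hf]
    simp only
    rw [Nat.factorization_eq_zero_of_not_prime _ h, pow_zero]
  rw [hcb, ← Finset.prod_filter_mul_prod_filter_not T (· ≤ n)]
  have hsplit2 : T.filter (fun p => ¬ p ≤ n) = (Finset.Ioc n (2*n)).filter Nat.Prime := by
    ext p
    simp only [hT, Finset.mem_filter, Finset.mem_range, Finset.mem_Ioc]
    constructor
    · rintro ⟨⟨hp1, hp2⟩, hp3⟩; exact ⟨⟨by omega, by omega⟩, hp2⟩
    · rintro ⟨⟨hp1, hp2⟩, hp3⟩; exact ⟨⟨by omega, hp3⟩, by omega⟩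
  apply Nat.mul_le_mul
  · -- primes ≤ n
    rw [← Finset.prod_filter_mul_prod_filter_not (T.filter (· ≤ n)) (· ≤ 2*n/3)]
    have hmid : ∏ p ∈ (T.filter (· ≤ n)).filter (fun p => ¬ p ≤ 2*n/3), f p = 1 := by
      refine Finset.prod_eq_one (fun p hp => ?_)
      simp only [Finset.mem_filter, hT, Finset.mem_range] at hp
      obtain ⟨⟨⟨hpr, hpp⟩, hpn⟩, hp23⟩ := hp
      rw [not_le, Nat.div_lt_iff_lt_mul three_pos, mul_comm p] at hp23
      rw [hf]
      simp only
      rw [Nat.factorization_centralBinom_of_two_mul_self_lt_three_mul hn hpn hp23, pow_zero]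
    rw [hmid, mul_one]
    set S := (T.filter (· ≤ n)).filter (· ≤ 2*n/3) with hS
    rw [← Finset.prod_filter_mul_prod_filter_not S (· ≤ Nat.sqrt (2*n))]
    apply Nat.mul_le_mul
    · -- small primes: each factor ≤ 2n, count ≤ sqrt(2n)
      have hcard : (S.filter (· ≤ Nat.sqrt (2*n))).card ≤ Nat.sqrt (2*n) := by
        have hsub : S.filter (· ≤ Nat.sqrt (2*n)) ⊆ Finset.Icc 1 (Nat.sqrt (2*n)) := by
          intro p hp
          simp only [hS, hT, Finset.mem_filter, Finset.mem_range] at hp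
          exact Finset.mem_Icc.mpr ⟨hp.1.1.1.2.one_lt.le, hp.2⟩
        calc (S.filter (· ≤ Nat.sqrt (2*n))).card ≤ (Finset.Icc 1 (Nat.sqrt (2*n))).card :=
              Finset.card_le_card hsub
        _ = Nat.sqrt (2*n) := by rw [Nat.card_Icc]; omega
      calc ∏ p ∈ S.filter (· ≤ Nat.sqrt (2*n)), f p
          ≤ (2*n) ^ (S.filter (· ≤ Nat.sqrt (2*n))).card := by
            refine Finset.prod_le_pow_card _ _ _ (fun p _ => ?_)
            exact Nat.pow_factorization_choose_le (by omega)
        _ ≤ (2*n) ^ Nat.sqrt (2*n) := Nat.pow_le_pow_right (by omega) hcard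
    · -- medium primes: f p ≤ p, product ≤ primorial (2n/3) ≤ 4^(2n/3)
      refine le_trans ?_ (primorial_le_4_pow (2*n/3))
      have hstep : ∀ p ∈ S.filter (fun p => ¬ p ≤ Nat.sqrt (2*n)), f p ≤ p := by
        intro p hp
        simp only [hS, hT, Finset.mem_filter, Finset.mem_range, not_le] at hp
        have hsq : 2*n < p^2 := by
          have := Nat.sqrt_lt'.mp hp.2
          nlinarith
        rw [hf]
        simp only
        calc p ^ (Nat.centralBinom n).factorization p ≤ p ^ 1 := by
              refine Nat.pow_le_pow_right hp.1.1.1.2.pos ?_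
              exact Nat.factorization_choose_le_one hsq
        _ = p := pow_one p
      calc ∏ p ∈ S.filter (fun p => ¬ p ≤ Nat.sqrt (2*n)), f p
          ≤ ∏ p ∈ S.filter (fun p => ¬ p ≤ Nat.sqrt (2*n)), p :=
            Finset.prod_le_prod' hstep
        _ ≤ primorial (2*n/3) := by
            rw [primorial]
            refine Finset.prod_le_prod_of_subset_of_one_le' ?_ ?_
            · intro p hp
              simp only [hS, hT, Finset.mem_filter, Finset.mem_range] at hp ⊢
              exact ⟨by omega, hp.1.1.1.2⟩
            · intro p hp _
              exact (Finset.mem_filter.1 hp).2.one_lt.le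
  · -- large primes
    rw [hsplit2]
    refine Finset.prod_le_pow_card _ _ _ (fun p _ => ?_)
    exact Nat.pow_factorization_choose_le (by omega)

lemma tendsto_primeCounting_sub :
    Filter.Tendsto (fun n : ℕ => ((Finset.Ioc n (2 * n)).filter Nat.Prime).card)
      Filter.atTop Filter.atTop := by
  rw [Filter.tendsto_atTop]
  intro K
  filter_upwards [nat_main K, Filter.eventually_ge_atTop 4] with n hmain h4
  by_contra hlt
  push_neg at hlt
  have hk : ((Finset.Ioc n (2*n)).filter Nat.Prime).card ≤ K := by omega
  have h1 : 4 ^ n < n * Nat.centralBinom n := Nat.four_pow_lt_mul_centralBinom n h4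
  have h2 := centralBinom_le n (by omega)
  have h3 : (2*n) ^ (((Finset.Ioc n (2*n)).filter Nat.Prime).card) ≤ (2*n) ^ K :=
    Nat.pow_le_pow_right (by omega) hk
  have : 4 ^ n < 4 ^ n := by
    calc 4 ^ n < n * Nat.centralBinom n := h1
    _ ≤ n * (((2*n) ^ Nat.sqrt (2*n) * 4 ^ (2*n/3)) * (2*n) ^ (((Finset.Ioc n (2*n)).filter Nat.Prime).card)) :=
        Nat.mul_le_mul_left n h2
    _ ≤ n * ((2*n) ^ Nat.sqrt (2*n) * 4 ^ (2*n/3) * (2*n) ^ K) := by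
        refine Nat.mul_le_mul_left n ?_
        exact Nat.mul_le_mul_left _ h3
    _ ≤ 4 ^ n := hmain
  omega

theorem stmt_15
    (h : ∃ C : ℤ, ∀ n : ℕ, 1 ≤ n → phiT (n ^ 2) (2 * n) n ≤ C) :
    Filter.Tendsto (fun n : ℕ => Nat.primeCounting ((n + 1) ^ 2) - Nat.primeCounting (n ^ 2))
      Filter.atTop Filter.atTop := by
  obtain ⟨C, hC⟩ := h
  rw [Filter.tendsto_atTop]
  intro b
  have hb := Filter.tendsto_atTop.mp tendsto_primeCounting_sub (b + (C + 1).toNat)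
  filter_upwards [hb, Filter.eventually_ge_atTop 1] with n hn h1
  -- π(2n) - π n = card primes in Ioc n 2n
  have hcard : ((Finset.Ioc n (2 * n)).filter Nat.Prime).card + Nat.primeCounting n
      = Nat.primeCounting (2 * n) := card_primes_Ioc n (2 * n) (by omega)
  have hkey := key_identity n h1
  have hphi := hC n h1
  have hgap : (b : ℤ) ≤ (Nat.primeCounting ((n + 1) ^ 2) : ℤ) - Nat.primeCounting (n ^ 2) := by
    have h2 : (b : ℤ) + (C + 1).toNat ≤ ((Finset.Ioc n (2 * n)).filter Nat.Prime).card := by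
      exact_mod_cast hn
    have h3 : (C : ℤ) ≤ (C + 1).toNat := by
      rcases le_or_gt 0 (C + 1) with h | h
      · omega
      · have : ((C+1).toNat : ℤ) = 0 := by omega
        omega
    have h4 : (Nat.primeCounting (2 * n) : ℤ) - Nat.primeCounting n
        = ((Finset.Ioc n (2 * n)).filter Nat.Prime).card := by
      have := hcard
      push_cast [← this]
      ring
    omega
  have hle : Nat.primeCounting (n ^ 2) ≤ Nat.primeCounting ((n + 1) ^ 2) :=
    Nat.monotone_primeCounting (by nlinarith)
  omega
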